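/- Let N' > 2 and τ > −2, and define f(p) = p·((2+τ)/(p−1))·(N'−2−(2+τ)/(p−1)) for p > 1. Then f((N'+τ)/(N'−2)) = 0; the equation f(p) = (N'−2)²/4 has a solution P_−(N',τ) in the interval ((N'+τ)/(N'−2), (N'+2+2τ)/(N'−2)). If 2 < N' ≤ 10 + 4τ, then f(p) < (N'−2)²/4 for 1 < p < P_−(N',τ) and f(p) > (N'−2)²/4 for p > P_−(N',τ). If N' > 10 + 4τ, then the equation f(p) = (N'−2)²/4 has a second root P_+(N',τ) in (1,∞) satisfying (N'+2+2τ)/(N'−2) < P_+(N',τ) < ∞, and f(p) < (N'−2)²/4 for p ∈ (1, P_−(N',τ)) ∪ (P_+(N',τ), ∞) while f(p) > (N'−2)²/4 for p ∈ (P_−(N',τ), P_+(N',τ)). -/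

import Mathlib

open Set Filter

noncomputable section

/-- `f(p) = p ((2+τ)/(p-1)) (N'-2-(2+τ)/(p-1))`. -/
def fF (N' τ p : ℝ) : ℝ := p * ((2 + τ) / (p - 1)) * (N' - 2 - (2 + τ) / (p - 1))

/-- `P₊(N',τ)` (defined for `N' ≠ 4τ + 10`). -/
def Pplus (N' τ : ℝ) : ℝ :=
  ((N' - 2) ^ 2 - 2 * (2 + τ) * (N' + τ)
      + 2 * (2 + τ) * Real.sqrt ((2 + τ) * (2 * N' + τ - 2)))
    / ((N' - 2) * (N' - 4 * τ - 10))

/-- `P₋(N',τ)`, with `P₋ = 4/3` in the degenerate case `N' = 4τ + 10`. -/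
def Pminus (N' τ : ℝ) : ℝ :=
  if N' = 4 * τ + 10 then 4 / 3 else
    ((N' - 2) ^ 2 - 2 * (2 + τ) * (N' + τ)
        - 2 * (2 + τ) * Real.sqrt ((2 + τ) * (2 * N' + τ - 2)))
      / ((N' - 2) * (N' - 4 * τ - 10))

/-- The basic comparison identity: for `p > 1`,
`(N'-2)²/4 - f(p) = A(p) / (4(p-1)²)` where `A` is the quadratic
`A(p) = (N'-2)(N'-4τ-10) p² - (2(N'-2)² - 4(2+τ)(N'+τ)) p + (N'-2)²`. -/
lemma fF_cmp (N' τ p : ℝ) (hp : 1 < p) :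
    (N' - 2) ^ 2 / 4 - fF N' τ p =
      ((N' - 2) * (N' - 4 * τ - 10) * p ^ 2
        - (2 * (N' - 2) ^ 2 - 4 * (2 + τ) * (N' + τ)) * p + (N' - 2) ^ 2)
        / (4 * (p - 1) ^ 2) := by
  have h1 : p - 1 ≠ 0 := ne_of_gt (by linarith)
  simp only [fF]
  field_simp
  ring

lemma fF_zero (N' τ : ℝ) (hN' : 2 < N') (hτ : -2 < τ) :
    fF N' τ ((N' + τ) / (N' - 2)) = 0 := by
  have hn : (0:ℝ) < N' - 2 := by linarith
  have hn1 : N' - 2 ≠ 0 := ne_of_gt hn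
  have h2 : (N' + τ) / (N' - 2) - 1 = (2 + τ) / (N' - 2) := by field_simp; ring
  have hs : (2:ℝ) + τ ≠ 0 := ne_of_gt (by linarith)
  have h3 : (2 + τ) / ((2 + τ) / (N' - 2)) = N' - 2 := by field_simp
  simp [fF, h2, h3]

set_option maxHeartbeats 1600000 in
/-- properties of `f`. Let `N' > 2`, `τ > -2`. Then
`f((N'+τ)/(N'-2)) = 0`; `P₋(N',τ)` lies in `((N'+τ)/(N'-2), (N'+2+2τ)/(N'-2))`
and solves `f(p) = (N'-2)²/4`. If `2 < N' ≤ 10+4τ` then `f < (N'-2)²/4` on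
`(1, P₋)` and `f > (N'-2)²/4` on `(P₋, ∞)`. If `N' > 10+4τ` there is a second
root `P₊(N',τ) ∈ ((N'+2+2τ)/(N'-2), ∞)`, and `f < (N'-2)²/4` on
`(1,P₋) ∪ (P₊,∞)` while `f > (N'-2)²/4` on `(P₋, P₊)`. -/
theorem stmt_19 (N' τ : ℝ) (hN' : 2 < N') (hτ : -2 < τ) :
    fF N' τ ((N' + τ) / (N' - 2)) = 0 ∧
    ((N' + τ) / (N' - 2) < Pminus N' τ ∧
      Pminus N' τ < (N' + 2 + 2 * τ) / (N' - 2) ∧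
      fF N' τ (Pminus N' τ) = (N' - 2) ^ 2 / 4) ∧
    (N' ≤ 10 + 4 * τ →
      (∀ p : ℝ, 1 < p → p < Pminus N' τ → fF N' τ p < (N' - 2) ^ 2 / 4) ∧
      (∀ p : ℝ, Pminus N' τ < p → (N' - 2) ^ 2 / 4 < fF N' τ p)) ∧
    (10 + 4 * τ < N' →
      fF N' τ (Pplus N' τ) = (N' - 2) ^ 2 / 4 ∧
      (N' + 2 + 2 * τ) / (N' - 2) < Pplus N' τ ∧
      (∀ p : ℝ, 1 < p → (p < Pminus N' τ ∨ Pplus N' τ < p) →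
        fF N' τ p < (N' - 2) ^ 2 / 4) ∧
      (∀ p : ℝ, Pminus N' τ < p → p < Pplus N' τ →
        (N' - 2) ^ 2 / 4 < fF N' τ p)) := by
  have hs : (0:ℝ) < 2 + τ := by linarith
  have hn : (0:ℝ) < N' - 2 := by linarith
  by_cases hdeg : N' = 4 * τ + 10
  · -- degenerate case
    subst hdeg
    have hn' : (0:ℝ) < 4 * τ + 10 - 2 := by linarith
    have hPm : Pminus (4 * τ + 10) τ = 4 / 3 := by rw [Pminus, if_pos rfl]
    have hf43 : fF (4 * τ + 10) τ (4 / 3) = (4 * τ + 10 - 2) ^ 2 / 4 := by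
      have h := fF_cmp (4 * τ + 10) τ (4 / 3) (by norm_num)
      have hz : (4 * τ + 10 - 2) * (4 * τ + 10 - 4 * τ - 10) * (4 / 3 : ℝ) ^ 2
          - (2 * (4 * τ + 10 - 2) ^ 2 - 4 * (2 + τ) * (4 * τ + 10 + τ)) * (4 / 3)
          + (4 * τ + 10 - 2) ^ 2 = 0 := by ring
      rw [hz, zero_div] at h
      linarith
    refine ⟨fF_zero _ _ hN' hτ, ⟨?_, ?_, ?_⟩, ?_, ?_⟩
    · rw [hPm, div_lt_iff₀ hn']; linarith
    · rw [hPm, lt_div_iff₀ hn']; linarith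
    · rw [hPm]; exact hf43
    · intro _
      constructor
      · intro p hp hlt
        rw [hPm] at hlt
        have h := fF_cmp (4 * τ + 10) τ p hp
        have hz : 0 < (4 * τ + 10 - 2) * (4 * τ + 10 - 4 * τ - 10) * p ^ 2
            - (2 * (4 * τ + 10 - 2) ^ 2 - 4 * (2 + τ) * (4 * τ + 10 + τ)) * p
            + (4 * τ + 10 - 2) ^ 2 := by
          nlinarith [mul_pos (mul_pos hs hs) (show (0:ℝ) < 4 - 3 * p by linarith)]
        have := div_pos hz (show (0:ℝ) < 4 * (p - 1) ^ 2 by nlinarith [mul_pos (show (0:ℝ) < p - 1 by linarith) (show (0:ℝ) < p - 1 by linarith)])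
        linarith
      · intro p hp
        rw [hPm] at hp
        have hp1 : 1 < p := by linarith
        have h := fF_cmp (4 * τ + 10) τ p hp1
        have hz : (4 * τ + 10 - 2) * (4 * τ + 10 - 4 * τ - 10) * p ^ 2
            - (2 * (4 * τ + 10 - 2) ^ 2 - 4 * (2 + τ) * (4 * τ + 10 + τ)) * p
            + (4 * τ + 10 - 2) ^ 2 < 0 := by
          nlinarith [mul_pos (mul_pos hs hs) (show (0:ℝ) < 3 * p - 4 by linarith)]
        have := div_neg_of_neg_of_pos hz (show (0:ℝ) < 4 * (p - 1) ^ 2 by nlinarith [mul_pos (show (0:ℝ) < p - 1 by linarith) (show (0:ℝ) < p - 1 by linarith)])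
        linarith
    · intro h; exact absurd h (by linarith)
  · -- nondegenerate case
    have hargpos : 0 < (2 + τ) * (2 * N' + τ - 2) := by nlinarith
    set R := Real.sqrt ((2 + τ) * (2 * N' + τ - 2)) with hRd
    have hR2 : R ^ 2 = (2 + τ) * (2 * N' + τ - 2) := Real.sq_sqrt (le_of_lt hargpos)
    have hR0 : 0 < R := Real.sqrt_pos.mpr hargpos
    have c1 : N' < 4 * τ + 10 → N' + 2 + 2 * τ < 2 * R := by
      intro h; nlinarith [hR2, hR0, sq_nonneg (2 * R - (N' + 2 + 2 * τ))]
    have c2 : N' < 4 * τ + 10 → R < 3 * (2 + τ) := by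
      intro h; nlinarith [hR2, hR0]
    have c3 : 4 * τ + 10 < N' → 2 * R < N' + 2 + 2 * τ := by
      intro h; nlinarith [hR2, hR0]
    have c4 : 4 * τ + 10 < N' → 3 * (2 + τ) < R := by
      intro h; nlinarith [hR2, hR0, sq_nonneg (R - 3 * (2 + τ))]
    have c5 : N' < 4 * τ + 10 →
        0 < (N' - 2) ^ 2 - 2 * (2 + τ) * (N' + τ) + 2 * (2 + τ) * R := by
      intro h
      rcases le_or_gt ((N' - 2) ^ 2 - 2 * (2 + τ) * (N' + τ)) 0 with hM | hM
      · nlinarith [hR2, mul_pos hs hR0, hn, mul_pos (mul_pos hn hn) hn]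
      · nlinarith [mul_pos hs hR0]
    have ha : (N' - 2) * (N' - 4 * τ - 10) ≠ 0 := by
      apply mul_ne_zero (ne_of_gt hn)
      intro h; exact hdeg (by linarith)
    have hPm : Pminus N' τ =
        ((N' - 2) ^ 2 - 2 * (2 + τ) * (N' + τ) - 2 * (2 + τ) * R)
          / ((N' - 2) * (N' - 4 * τ - 10)) := by
      rw [Pminus, if_neg hdeg]
    have hPp : Pplus N' τ =
        ((N' - 2) ^ 2 - 2 * (2 + τ) * (N' + τ) + 2 * (2 + τ) * R)
          / ((N' - 2) * (N' - 4 * τ - 10)) := by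
      rw [Pplus]
    have hapm : (N' - 2) * (N' - 4 * τ - 10) * Pminus N' τ
        = (N' - 2) ^ 2 - 2 * (2 + τ) * (N' + τ) - 2 * (2 + τ) * R := by
      rw [hPm]; field_simp
      exact mul_div_cancel_left₀ _ (fun h => hdeg (by linarith))
    have happ : (N' - 2) * (N' - 4 * τ - 10) * Pplus N' τ
        = (N' - 2) ^ 2 - 2 * (2 + τ) * (N' + τ) + 2 * (2 + τ) * R := by
      rw [hPp]; field_simp
      exact mul_div_cancel_left₀ _ (fun h => hdeg (by linarith))
    have hpmpp : (N' - 2) * (N' - 4 * τ - 10) * (Pminus N' τ * Pplus N' τ)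
        = (N' - 2) ^ 2 := by
      apply mul_left_cancel₀ ha
      linear_combination ((N' - 2) * (N' - 4 * τ - 10) * Pplus N' τ) * hapm
        + ((N' - 2) ^ 2 - 2 * (2 + τ) * (N' + τ) - 2 * (2 + τ) * R) * happ
        - (4 * (2 + τ) ^ 2) * hR2
    have hfac : ∀ p : ℝ, (N' - 2) * (N' - 4 * τ - 10) * p ^ 2
        - (2 * (N' - 2) ^ 2 - 4 * (2 + τ) * (N' + τ)) * p + (N' - 2) ^ 2
        = (N' - 2) * (N' - 4 * τ - 10) * (p - Pminus N' τ) * (p - Pplus N' τ) := by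
      intro p
      linear_combination p * hapm + p * happ - hpmpp
    have hx1gt : 1 < (N' + τ) / (N' - 2) := by rw [lt_div_iff₀ hn]; linarith
    rcases lt_or_gt_of_ne hdeg with hlt | hgt
    · -- a < 0 case : N' < 4τ + 10
      have h4 : (0:ℝ) < 4 * τ + 10 - N' := by linarith
      have hc1 : N' + 2 + 2 * τ < 2 * R := c1 hlt
      have hc2 : R < 3 * (2 + τ) := c2 hlt
      have hb1 : (N' + τ) / (N' - 2) < Pminus N' τ := by
        rw [div_lt_iff₀ hn]
        nlinarith [hapm, mul_pos hs (sub_pos.mpr hc1), h4]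
      have hb2 : Pminus N' τ < (N' + 2 + 2 * τ) / (N' - 2) := by
        rw [lt_div_iff₀ hn]
        nlinarith [hapm, mul_pos hs (sub_pos.mpr hc2), h4]
      have hpm1 : 1 < Pminus N' τ := hx1gt.trans hb1
      have hMR : 0 < (N' - 2) ^ 2 - 2 * (2 + τ) * (N' + τ) + 2 * (2 + τ) * R := c5 hlt
      have hppneg : Pplus N' τ < 0 := by
        nlinarith [happ, hMR, mul_pos hn h4]
      have hfpm : fF N' τ (Pminus N' τ) = (N' - 2) ^ 2 / 4 := by
        have h := fF_cmp N' τ (Pminus N' τ) hpm1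
        rw [hfac (Pminus N' τ)] at h
        have hz : (N' - 2) * (N' - 4 * τ - 10) * (Pminus N' τ - Pminus N' τ)
            * (Pminus N' τ - Pplus N' τ) = 0 := by ring
        rw [hz, zero_div] at h
        linarith
      refine ⟨fF_zero _ _ hN' hτ, ⟨hb1, hb2, hfpm⟩, ?_, ?_⟩
      · intro _
        constructor
        · intro p hp hplt
          have h := fF_cmp N' τ p hp
          rw [hfac p] at h
          have hz : 0 < (N' - 2) * (N' - 4 * τ - 10) * (p - Pminus N' τ)
              * (p - Pplus N' τ) := by
            nlinarith [mul_pos (mul_pos (mul_pos hn h4)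
              (show (0:ℝ) < Pminus N' τ - p by linarith))
              (show (0:ℝ) < p - Pplus N' τ by linarith)]
          have := div_pos hz (show (0:ℝ) < 4 * (p - 1) ^ 2 by nlinarith [mul_pos (show (0:ℝ) < p - 1 by linarith) (show (0:ℝ) < p - 1 by linarith)])
          linarith
        · intro p hp
          have hp1 : 1 < p := hpm1.trans hp
          have h := fF_cmp N' τ p hp1
          rw [hfac p] at h
          have hz : (N' - 2) * (N' - 4 * τ - 10) * (p - Pminus N' τ)
              * (p - Pplus N' τ) < 0 := by
            nlinarith [mul_pos (mul_pos (mul_pos hn h4)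
              (show (0:ℝ) < p - Pminus N' τ by linarith))
              (show (0:ℝ) < p - Pplus N' τ by linarith)]
          have := div_neg_of_neg_of_pos hz (show (0:ℝ) < 4 * (p - 1) ^ 2 by nlinarith [mul_pos (show (0:ℝ) < p - 1 by linarith) (show (0:ℝ) < p - 1 by linarith)])
          linarith
      · intro h; exact absurd h (not_lt.mpr (by linarith))
    · -- a > 0 case : N' > 4τ + 10
      have h4 : (0:ℝ) < N' - 4 * τ - 10 := by linarith
      have hc3 : 2 * R < N' + 2 + 2 * τ := c3 hgt
      have hc4 : 3 * (2 + τ) < R := c4 hgt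
      have hb1 : (N' + τ) / (N' - 2) < Pminus N' τ := by
        rw [div_lt_iff₀ hn]
        nlinarith [hapm, mul_pos hs (sub_pos.mpr hc3), h4]
      have hb2 : Pminus N' τ < (N' + 2 + 2 * τ) / (N' - 2) := by
        rw [lt_div_iff₀ hn]
        nlinarith [hapm, mul_pos hs (sub_pos.mpr hc4), h4]
      have hb3 : (N' + 2 + 2 * τ) / (N' - 2) < Pplus N' τ := by
        rw [div_lt_iff₀ hn]
        nlinarith [happ, mul_pos hs hR0, mul_pos hs hs, h4]
      have hpm1 : 1 < Pminus N' τ := hx1gt.trans hb1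
      have hx2gt : 1 < (N' + 2 + 2 * τ) / (N' - 2) := by rw [lt_div_iff₀ hn]; linarith
      have hpp1 : 1 < Pplus N' τ := hx2gt.trans hb3
      have hpmlt : Pminus N' τ < Pplus N' τ := by
        nlinarith [hapm, happ, mul_pos hs hR0, mul_pos hn h4]
      have hfpm : fF N' τ (Pminus N' τ) = (N' - 2) ^ 2 / 4 := by
        have h := fF_cmp N' τ (Pminus N' τ) hpm1
        rw [hfac (Pminus N' τ)] at h
        have hz : (N' - 2) * (N' - 4 * τ - 10) * (Pminus N' τ - Pminus N' τ)
            * (Pminus N' τ - Pplus N' τ) = 0 := by ring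
        rw [hz, zero_div] at h
        linarith
      have hfpp : fF N' τ (Pplus N' τ) = (N' - 2) ^ 2 / 4 := by
        have h := fF_cmp N' τ (Pplus N' τ) hpp1
        rw [hfac (Pplus N' τ)] at h
        have hz : (N' - 2) * (N' - 4 * τ - 10) * (Pplus N' τ - Pminus N' τ)
            * (Pplus N' τ - Pplus N' τ) = 0 := by ring
        rw [hz, zero_div] at h
        linarith
      refine ⟨fF_zero _ _ hN' hτ, ⟨hb1, hb2, hfpm⟩, ?_, ?_⟩
      · intro h; exact absurd h (not_le.mpr (by linarith))
      · intro _
        refine ⟨hfpp, hb3, ?_, ?_⟩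
        · intro p hp hor
          have h := fF_cmp N' τ p hp
          rw [hfac p] at h
          have hz : 0 < (N' - 2) * (N' - 4 * τ - 10) * (p - Pminus N' τ)
              * (p - Pplus N' τ) := by
            rcases hor with h1 | h1
            · nlinarith [mul_pos (mul_pos (mul_pos hn h4)
                (show (0:ℝ) < Pminus N' τ - p by linarith))
                (show (0:ℝ) < Pplus N' τ - p by linarith)]
            · nlinarith [mul_pos (mul_pos (mul_pos hn h4)
                (show (0:ℝ) < p - Pminus N' τ by linarith))
                (show (0:ℝ) < p - Pplus N' τ by linarith)]
          have := div_pos hz (show (0:ℝ) < 4 * (p - 1) ^ 2 by nlinarith [mul_pos (show (0:ℝ) < p - 1 by linarith) (show (0:ℝ) < p - 1 by linarith)])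
          linarith
        · intro p h1 h2
          have hp1 : 1 < p := hpm1.trans h1
          have h := fF_cmp N' τ p hp1
          rw [hfac p] at h
          have hz : (N' - 2) * (N' - 4 * τ - 10) * (p - Pminus N' τ)
              * (p - Pplus N' τ) < 0 := by
            nlinarith [mul_pos (mul_pos (mul_pos hn h4)
              (show (0:ℝ) < p - Pminus N' τ by linarith))
              (show (0:ℝ) < Pplus N' τ - p by linarith)]
          have := div_neg_of_neg_of_pos hz (show (0:ℝ) < 4 * (p - 1) ^ 2 by nlinarith [mul_pos (show (0:ℝ) < p - 1 by linarith) (show (0:ℝ) < p - 1 by linarith)])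
          linarith

end
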